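/- For every natural number n ≥ 1 and every real (or complex) T with T ≠ ±1 and T^n ≠ 1, one has (1/n) · ∑_{k=0}^{n-1} 1/(1 - 2·cos(2kπ/n)·T + T²) = (1 - T^{2n}) / ((1 - T²)·(1 - T^n)²). -/

import Mathlib

open Finset

private lemma aux_geom (n : ℕ) (a t : ℂ) (han : a ^ n = 1) :
    (1 - a * t) * ∑ m ∈ range n, (a * t) ^ m = 1 - t ^ n := by
  have h := geom_sum_mul (a * t) n
  have h2 : (a * t) ^ n = t ^ n := by rw [mul_pow, han, one_mul]
  linear_combination -h - h2

private lemma aux_term (n : ℕ) (a t : ℂ) (hab : a * a⁻¹ = 1) (han : a ^ n = 1)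
    (h1 : 1 - a * t ≠ 0) (h2 : 1 - a⁻¹ * t ≠ 0) :
    1 / ((1 - a * t) * (1 - a⁻¹ * t)) * ((1 - t ^ 2) * (1 - t ^ n)) =
      (∑ m ∈ range n, (a * t) ^ m) + a⁻¹ * t * ∑ m ∈ range n, (a⁻¹ * t) ^ m := by
  have hbn : (a⁻¹) ^ n = 1 := by
    have : (a * a⁻¹) ^ n = 1 := by rw [hab, one_pow]
    rw [mul_pow, han, one_mul] at this
    exact this
  have g1 := aux_geom n a t han
  have g2 := aux_geom n a⁻¹ t hbn
  rw [div_mul_eq_mul_div, one_mul, div_eq_iff (mul_ne_zero h1 h2)]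
  linear_combination (-(1 - a⁻¹*t))*g1 - a⁻¹*t*(1 - a*t)*g2 + (1 - t^n)*t^2*hab

private lemma root_sum (n : ℕ) (ξ : ℂ) (hξ : IsPrimitiveRoot ξ n) (m : ℕ) :
    ∑ k ∈ range n, (ξ ^ m) ^ k = if n ∣ m then (n : ℂ) else 0 := by
  by_cases h : ξ ^ m = 1
  · rw [if_pos ((hξ.pow_eq_one_iff_dvd m).mp h)]
    simp [h]
  · rw [if_neg (fun hd => h ((hξ.pow_eq_one_iff_dvd m).mpr hd))]
    rw [geom_sum_eq h]
    have hx : (ξ ^ m) ^ n = 1 := by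
      rw [← pow_mul, mul_comm, pow_mul, hξ.pow_eq_one, one_pow]
    simp [hx]

theorem stmt0 (n : ℕ) (hn : 1 ≤ n) (T : ℝ) (hT1 : T ≠ 1) (hT2 : T ≠ -1)
    (hTn : T ^ n ≠ 1) :
    (1 / (n : ℝ)) * ∑ k ∈ Finset.range n,
        1 / (1 - 2 * Real.cos (2 * (k : ℝ) * Real.pi / (n : ℝ)) * T + T ^ 2) =
      (1 - T ^ (2 * n)) / ((1 - T ^ 2) * (1 - T ^ n) ^ 2) := by
  have hn0 : n ≠ 0 := by omega
  have hnC : (n : ℂ) ≠ 0 := Nat.cast_ne_zero.mpr hn0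
  set t : ℂ := (T : ℂ) with ht_def
  have ht1 : (1 : ℂ) - t ≠ 0 := by
    rw [ht_def, sub_ne_zero]
    intro h
    exact hT1 (by exact_mod_cast h.symm)
  have ht1' : (1 : ℂ) + t ≠ 0 := by
    intro h
    have h2 : (T : ℂ) = ((-1 : ℝ) : ℂ) := by push_cast; linear_combination h
    exact hT2 (Complex.ofReal_inj.mp h2)
  have ht2 : (1 : ℂ) - t ^ 2 ≠ 0 := by
    have h3 : (1 : ℂ) - t ^ 2 = (1 - t) * (1 + t) := by ring
    rw [h3]; exact mul_ne_zero ht1 ht1'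
  have htn : (1 : ℂ) - t ^ n ≠ 0 := by
    rw [ht_def, sub_ne_zero]
    intro h
    exact hTn (by exact_mod_cast h.symm)
  set ζ : ℂ := Complex.exp (2 * Real.pi * Complex.I / n) with hζ_def
  have hζ : IsPrimitiveRoot ζ n := Complex.isPrimitiveRoot_exp n hn0
  -- each factor is nonzero
  have habs : ∀ k : ℕ, ‖ζ ^ k‖ = 1 := by
    intro k
    rw [norm_pow]
    have h4 : ζ = Complex.exp (((2 * Real.pi / n : ℝ) : ℂ) * Complex.I) := by
      rw [hζ_def]; congr 1; push_cast; ring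
    rw [h4, Complex.norm_exp_ofReal_mul_I, one_pow]
  have hne : ∀ a : ℂ, ‖a‖ = 1 → 1 - a * t ≠ 0 := by
    intro a ha h
    have h' : a * t = 1 := by linear_combination -h
    have h5 : ‖a * t‖ = 1 := by rw [h', norm_one]
    rw [norm_mul, ha, one_mul, ht_def, Complex.norm_real, Real.norm_eq_abs] at h5
    rcases (abs_eq (by norm_num : (0:ℝ) ≤ 1)).mp h5 with h1 | h1
    · exact hT1 h1
    · exact hT2 h1
  have hne1 : ∀ k : ℕ, 1 - ζ ^ k * t ≠ 0 := fun k => hne _ (habs k)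
  have hne2 : ∀ k : ℕ, 1 - (ζ ^ k)⁻¹ * t ≠ 0 := by
    intro k
    apply hne
    rw [norm_inv, habs k, inv_one]
  have hinv : ∀ k : ℕ, ζ ^ k * (ζ ^ k)⁻¹ = 1 := by
    intro k
    refine mul_inv_cancel₀ (fun h => ?_)
    have h6 := habs k
    rw [h, norm_zero] at h6
    norm_num at h6
  have hpow : ∀ k : ℕ, (ζ ^ k) ^ n = 1 := by
    intro k
    rw [← pow_mul, mul_comm, pow_mul, hζ.pow_eq_one, one_pow]
  -- the key complex sum
  have key : (∑ k ∈ range n, 1 / ((1 - ζ ^ k * t) * (1 - (ζ ^ k)⁻¹ * t))) *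
      ((1 - t ^ 2) * (1 - t ^ n)) = (n : ℂ) * (1 + t ^ n) := by
    rw [Finset.sum_mul]
    have step : ∀ k ∈ range n,
        1 / ((1 - ζ ^ k * t) * (1 - (ζ ^ k)⁻¹ * t)) * ((1 - t ^ 2) * (1 - t ^ n)) =
          (∑ m ∈ range n, (ζ ^ m) ^ k * t ^ m) +
            ∑ m ∈ range n, ((ζ⁻¹) ^ (m + 1)) ^ k * t ^ (m + 1) := by
      intro k _
      rw [aux_term n (ζ ^ k) t (hinv k) (hpow k) (hne1 k) (hne2 k)]
      congr 1
      · exact Finset.sum_congr rfl fun m _ => by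
          rw [mul_pow, ← pow_mul, mul_comm k m, pow_mul]
      · rw [Finset.mul_sum]
        refine Finset.sum_congr rfl fun m _ => ?_
        have h7 : ζ⁻¹ ^ ((m + 1) * k) = ζ⁻¹ ^ k * ζ⁻¹ ^ (k * m) := by
          rw [← pow_add]; congr 1; ring
        rw [← inv_pow ζ k, mul_pow, ← pow_mul, ← pow_mul, h7]
        ring
    rw [Finset.sum_congr rfl step, Finset.sum_add_distrib]
    have hξinv : IsPrimitiveRoot (ζ⁻¹) n := hζ.inv
    have s1 : ∑ k ∈ range n, ∑ m ∈ range n, (ζ ^ m) ^ k * t ^ m = (n : ℂ) := by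
      rw [Finset.sum_comm]
      have h8 : ∀ m ∈ range n, ∑ k ∈ range n, (ζ ^ m) ^ k * t ^ m =
          (if n ∣ m then (n : ℂ) else 0) * t ^ m := by
        intro m _
        rw [← Finset.sum_mul, root_sum n ζ hζ m]
      rw [Finset.sum_congr rfl h8]
      rw [Finset.sum_eq_single 0]
      · simp
      · intro m hm hm0
        rw [if_neg, zero_mul]
        intro hd
        exact hm0 (Nat.eq_zero_of_dvd_of_lt hd (mem_range.mp hm))
      · intro h; exact absurd (mem_range.mpr (by omega)) h
    have s2 : ∑ k ∈ range n, ∑ m ∈ range n, ((ζ⁻¹) ^ (m + 1)) ^ k * t ^ (m + 1) =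
        (n : ℂ) * t ^ n := by
      rw [Finset.sum_comm]
      have h9 : ∀ m ∈ range n, ∑ k ∈ range n, ((ζ⁻¹) ^ (m + 1)) ^ k * t ^ (m + 1) =
          (if n ∣ (m + 1) then (n : ℂ) else 0) * t ^ (m + 1) := by
        intro m _
        rw [← Finset.sum_mul, root_sum n (ζ⁻¹) hξinv (m + 1)]
      rw [Finset.sum_congr rfl h9]
      rw [Finset.sum_eq_single (n - 1)]
      · rw [show n - 1 + 1 = n by omega, if_pos dvd_rfl]
      · intro m hm hm0
        rw [if_neg, zero_mul]
        intro hd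
        have h1 := Nat.le_of_dvd (by omega) hd
        have h2 := mem_range.mp hm
        omega
      · intro h; exact absurd (mem_range.mpr (by omega)) h
    rw [s1, s2]; ring
  -- the cosine factorization
  have hcos : ∀ k : ℕ, 2 * Complex.cos (2 * (k : ℂ) * (Real.pi : ℂ) / (n : ℂ)) =
      ζ ^ k + (ζ ^ k)⁻¹ := by
    intro k
    have harg : (2 * (k : ℂ) * (Real.pi : ℂ) / (n : ℂ)) * Complex.I =
        (k : ℂ) * (2 * Real.pi * Complex.I / n) := by ring
    rw [Complex.cos, hζ_def, ← Complex.exp_nat_mul, ← harg, ← Complex.exp_neg, neg_mul]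
    ring
  have hfac : ∀ k : ℕ, (1 : ℂ) - 2 * Complex.cos (2 * (k : ℂ) * (Real.pi : ℂ) / (n : ℂ)) * t
      + t ^ 2 = (1 - ζ ^ k * t) * (1 - (ζ ^ k)⁻¹ * t) := by
    intro k
    linear_combination (-t) * hcos k - t ^ 2 * hinv k
  -- conclude over ℝ via coercion
  rw [← Complex.ofReal_inj]
  push_cast
  rw [show ((T : ℝ) : ℂ) = t from rfl]
  simp only [hfac]
  have hsum : ∑ k ∈ range n, 1 / ((1 - ζ ^ k * t) * (1 - (ζ ^ k)⁻¹ * t)) =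
      (n : ℂ) * (1 + t ^ n) / ((1 - t ^ 2) * (1 - t ^ n)) := by
    rw [eq_div_iff (mul_ne_zero ht2 htn)]
    exact key
  rw [hsum, mul_comm 2 n, pow_mul]
  have hq : ((1 : ℂ) - t ^ n) ≠ 0 := htn
  field_simp
  ring
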